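/- arXiv:1303.5600 — 3 statements merged into one kernel-verified Lean document; each statement's English description precedes it below -/
import Mathlib

section
/- Given λ* > 0 there exists a constant R > 0 such that every C² periodic solution u of u'' + u/|u|^{q+1} = λh with 0 ≤ λ ≤ λ* satisfies |u(t)| ≤ R for all t ∈ [0,1]. -/
open Set MeasureTheory Filter Topology

/-- If `f'' ≥ -K` wherever `f ≥ 1` on `[a,s]`, `f' a ≥ 0`, `f a > 1 + K`
and the interval has length at most 1, then `f s > 1`. -/
lemma right_dip (f f' f'' : ℝ → ℝ)
    (hd1 : ∀ t, HasDerivAt f (f' t) t) (hd2 : ∀ t, HasDerivAt f' (f'' t) t)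
    (hc'' : Continuous f'')
    (K a s : ℝ) (hK : 0 ≤ K) (has : a ≤ s) (hlen : s - a ≤ 1)
    (hbound : ∀ t ∈ Icc a s, 1 ≤ f t → -K ≤ f'' t)
    (hda : 0 ≤ f' a) (hfa : 1 + K < f a) (hfs : f s ≤ 1) : False := by
  have hdf : Differentiable ℝ f := fun t => (hd1 t).differentiableAt
  have hdf' : Differentiable ℝ f' := fun t => (hd2 t).differentiableAt
  have hfc : Continuous f := hdf.continuous
  have hfc' : Continuous f' := hdf'.continuous
  set B : Set ℝ := Icc a s ∩ f ⁻¹' (Iic 1) with hBdef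
  have hBne : B.Nonempty := ⟨s, ⟨has, le_rfl⟩, hfs⟩
  have hBclosed : IsClosed B := isClosed_Icc.inter (isClosed_Iic.preimage hfc)
  have hBbdd : BddBelow B := ⟨a, fun x hx => hx.1.1⟩
  set s₁ := sInf B with hs₁def
  have hs₁B : s₁ ∈ B := hBclosed.csInf_mem hBne hBbdd
  have has₁ : a ≤ s₁ := hs₁B.1.1
  have ha_lt : a < s₁ := by
    rcases eq_or_lt_of_le has₁ with h | h
    · exfalso; have := hs₁B.2; rw [← h] at this; simp at this; linarith
    · exact h
  have hnotB : ∀ t ∈ Ico a s₁, 1 < f t := by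
    intro t ht
    by_contra hcon
    push_neg at hcon
    have : t ∈ B := ⟨⟨ht.1, le_trans ht.2.le hs₁B.1.2⟩, hcon⟩
    exact absurd (csInf_le hBbdd this) (not_le.2 ht.2)
  have hge1 : ∀ t ∈ Icc a s₁, 1 ≤ f t := by
    have hsub : Icc a s₁ ⊆ {t : ℝ | 1 ≤ f t} := by
      rw [← closure_Ico (ne_of_lt ha_lt)]
      exact (IsClosed.closure_subset_iff (isClosed_le continuous_const hfc)).mpr
        (fun x hx => (hnotB x hx).le)
    exact fun t ht => hsub ht
  have hf''low : ∀ t ∈ Icc a s₁, -K ≤ f'' t := fun t ht =>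
    hbound t ⟨ht.1, ht.2.trans hs₁B.1.2⟩ (hge1 t ht)
  have hf'low : ∀ t ∈ Icc a s₁, -K ≤ f' t := by
    intro t ht
    have hftc : ∫ x in a..t, f'' x = f' t - f' a :=
      intervalIntegral.integral_eq_sub_of_hasDerivAt (fun x _ => hd2 x)
        (hc''.intervalIntegrable _ _)
    have hmono : ∫ x in a..t, (-K) ≤ ∫ x in a..t, f'' x := by
      apply intervalIntegral.integral_mono_on ht.1 (intervalIntegrable_const)
        (hc''.intervalIntegrable _ _)
      intro x hx
      exact hf''low x ⟨hx.1, hx.2.trans ht.2⟩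
    rw [intervalIntegral.integral_const, smul_eq_mul] at hmono
    have h1 : t - a ≤ 1 := by
      have := ht.2
      linarith [hs₁B.1.2]
    nlinarith [hftc, hmono, ht.1]
  have hfinal : ∫ x in a..s₁, (-K) ≤ ∫ x in a..s₁, f' x := by
    apply intervalIntegral.integral_mono_on has₁ (intervalIntegrable_const)
      (hfc'.intervalIntegrable _ _)
    exact hf'low
  have hftc2 : ∫ x in a..s₁, f' x = f s₁ - f a :=
    intervalIntegral.integral_eq_sub_of_hasDerivAt (fun x _ => hd1 x)
      (hfc'.intervalIntegrable _ _)
  rw [intervalIntegral.integral_const, smul_eq_mul, hftc2] at hfinal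
  have hlen1 : s₁ - a ≤ 1 := by linarith [hs₁B.1.2]
  have : f s₁ ≤ 1 := hs₁B.2
  nlinarith

/-- Mirror image of `right_dip`. -/
lemma left_dip (f f' f'' : ℝ → ℝ)
    (hd1 : ∀ t, HasDerivAt f (f' t) t) (hd2 : ∀ t, HasDerivAt f' (f'' t) t)
    (hc'' : Continuous f'')
    (K s b : ℝ) (hK : 0 ≤ K) (hsb : s ≤ b) (hlen : b - s ≤ 1)
    (hbound : ∀ t ∈ Icc s b, 1 ≤ f t → -K ≤ f'' t)
    (hdb : f' b ≤ 0) (hfb : 1 + K < f b) (hfs : f s ≤ 1) : False := by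
  have hσ : ∀ t : ℝ, HasDerivAt (fun x : ℝ => s + b - x) (-1) t := by
    intro t
    simpa using (hasDerivAt_id t).const_sub (s + b)
  have hd1' : ∀ t, HasDerivAt (fun x => f (s + b - x)) (f' (s + b - t) * (-1)) t :=
    fun t => (hd1 _).comp t (hσ t)
  have hd2' : ∀ t, HasDerivAt (fun x => f' (s + b - x) * (-1)) (f'' (s + b - t)) t := by
    intro t
    have := ((hd2 _).comp t (hσ t)).mul_const (-1)
    simpa using this
  refine right_dip (fun x => f (s + b - x)) (fun x => f' (s + b - x) * (-1))
    (fun x => f'' (s + b - x)) hd1' hd2' (hc''.comp (by continuity)) K s b hK hsb hlen ?_ ?_ ?_ ?_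
  · intro t ht h1
    exact hbound (s + b - t) ⟨by linarith [ht.2], by linarith [ht.1]⟩ h1
  · show 0 ≤ f' (s + b - s) * (-1)
    have h1 : s + b - s = b := by ring
    rw [h1]; linarith
  · show 1 + K < f (s + b - s)
    have h1 : s + b - s = b := by ring
    rw [h1]; linarith
  · show f (s + b - b) ≤ 1
    have h1 : s + b - b = s := by ring
    rw [h1]; linarith

open scoped RealInnerProductSpace

set_option maxHeartbeats 1600000 in
/-- Uniform a priori upper bound: given `λ* > 0` there is `R > 0` such that every periodic
solution of `u'' + u/|u|^(q+1) = λ h` with `0 ≤ λ ≤ λ*` satisfies `|u(t)| ≤ R` on `[0,1]`. -/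
theorem uniform_upper_bound (n q : ℕ) (hq : 2 ≤ q)
    (h : ℝ → EuclideanSpace ℝ (Fin n)) (hh : Continuous h)
    (hmean : ∫ t in (0:ℝ)..1, h t = 0)
    (lamstar : ℝ) (hls : 0 < lamstar) :
    ∃ R > (0:ℝ), ∀ (lam : ℝ) (u : ℝ → EuclideanSpace ℝ (Fin n)),
      0 ≤ lam → lam ≤ lamstar →
      ContDiff ℝ 2 u → u 0 = u 1 → deriv u 0 = deriv u 1 →
      (∀ t ∈ Icc (0:ℝ) 1, u t ≠ 0) →
      (∀ t ∈ Icc (0:ℝ) 1,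
        deriv (deriv u) t + (‖u t‖ ^ (q + 1))⁻¹ • u t = lam • h t) →
      ∀ t ∈ Icc (0:ℝ) 1, ‖u t‖ ≤ R := by
  classical
  -- a bound for `h` on `[0,1]`
  obtain ⟨tH, htH, hmaxH⟩ := isCompact_Icc.exists_isMaxOn (nonempty_Icc.2 zero_le_one)
    (hh.norm.continuousOn : ContinuousOn (fun t => ‖h t‖) (Icc 0 1))
  set H := ‖h tH‖ with hHdef
  have hH0 : (0:ℝ) ≤ H := norm_nonneg _
  have hHb : ∀ t ∈ Icc (0:ℝ) 1, ‖h t‖ ≤ H := fun t ht => hmaxH ht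
  refine ⟨2*lamstar*H + 4, by nlinarith, ?_⟩
  intro lam u hlam0 hlam1 hu hper hper' hne heq
  by_contra hcon
  push_neg at hcon
  obtain ⟨t₁, ht₁, ht₁R⟩ := hcon
  -- derivatives of u
  set u' := deriv u with hu'def
  set u'' := deriv (deriv u) with hu''def
  have hud : Differentiable ℝ u := hu.differentiable (by norm_num)
  have h1 : ContDiff ℝ 1 u' := by
    have h2 : ContDiff ℝ (1+1 : ℕ) u := by exact_mod_cast hu
    exact ((contDiff_succ_iff_deriv (n := 1)).mp (by exact_mod_cast h2)).2.2
  have hud' : Differentiable ℝ u' := (contDiff_one_iff_deriv.mp h1).1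
  have hcu'' : Continuous u'' := (contDiff_one_iff_deriv.mp h1).2
  have hd1 : ∀ t, HasDerivAt u (u' t) t := fun t => (hud t).hasDerivAt
  have hd2 : ∀ t, HasDerivAt u' (u'' t) t := fun t => (hud' t).hasDerivAt
  have hcu : Continuous u := hud.continuous
  have hcu' : Continuous u' := hud'.continuous
  -- the equation, solved for u''
  have heq' : ∀ t ∈ Icc (0:ℝ) 1, u'' t = lam • h t - (‖u t‖ ^ (q+1))⁻¹ • u t :=
    fun t ht => eq_sub_of_add_eq (heq t ht)
  -- maximum of ‖u‖
  obtain ⟨t₀, ht₀, hmax⟩ := isCompact_Icc.exists_isMaxOn (nonempty_Icc.2 zero_le_one)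
    (hcu.norm.continuousOn : ContinuousOn (fun t => ‖u t‖) (Icc 0 1))
  set M := ‖u t₀‖ with hMdef
  have hM0 : (0:ℝ) ≤ M := norm_nonneg _
  have hMb : ∀ t ∈ Icc (0:ℝ) 1, ‖u t‖ ≤ M := fun t ht => hmax ht
  have hMR : 2*lamstar*H + 4 < M := lt_of_lt_of_le ht₁R (hMb t₁ ht₁)
  have hlsH : (0:ℝ) ≤ 2*lamstar*H := by positivity
  have hM4 : 4 < M := by linarith
  -- the squared norm function and its derivatives
  set φ : ℝ → ℝ := fun t => ⟪u t, u t⟫ with hφdef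
  set φ' : ℝ → ℝ := fun t => ⟪u t, u' t⟫ + ⟪u' t, u t⟫ with hφ'def
  set φ'' : ℝ → ℝ := fun t =>
    (⟪u t, u'' t⟫ + ⟪u' t, u' t⟫) + (⟪u' t, u' t⟫ + ⟪u'' t, u t⟫) with hφ''def
  have hdφ : ∀ t, HasDerivAt φ (φ' t) t := fun t => (hd1 t).inner ℝ (hd1 t)
  have hdφ' : ∀ t, HasDerivAt φ' (φ'' t) t :=
    fun t => ((hd1 t).inner ℝ (hd2 t)).add ((hd2 t).inner ℝ (hd1 t))
  have hcφ'' : Continuous φ'' :=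
    ((hcu.inner hcu'').add (hcu'.inner hcu')).add ((hcu'.inner hcu').add (hcu''.inner hcu))
  have hφnorm : ∀ t, φ t = ‖u t‖^2 := fun t => real_inner_self_eq_norm_sq _
  -- the semiconvexity constant
  set KM : ℝ := 2*(lamstar*(M*H) + 1) with hKMdef
  have hKM0 : (0:ℝ) ≤ KM := by positivity
  -- bound for φ'' where ‖u‖ ≥ 1
  have hbound : ∀ t ∈ Icc (0:ℝ) 1, 1 ≤ φ t → -KM ≤ φ'' t := by
    intro t ht h1t
    have hn1 : 1 ≤ ‖u t‖ := by
      have h1' := h1t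
      rw [hφnorm t] at h1'
      by_contra hxc
      push_neg at hxc
      have := pow_lt_one₀ (norm_nonneg (u t)) hxc (two_ne_zero)
      linarith
    have hinner : ⟪u t, u'' t⟫ = lam * ⟪u t, h t⟫ - (‖u t‖^(q+1))⁻¹ * ⟪u t, u t⟫ := by
      rw [heq' t ht, inner_sub_right, real_inner_smul_right, real_inner_smul_right]
    have hinner2 : ⟪u'' t, u t⟫ = ⟪u t, u'' t⟫ := real_inner_comm _ _
    have hch : |⟪u t, h t⟫| ≤ M * H := by
      calc |⟪u t, h t⟫| ≤ ‖u t‖ * ‖h t‖ := abs_real_inner_le_norm _ _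
        _ ≤ M * H := mul_le_mul (hMb t ht) (hHb t ht) (norm_nonneg _) hM0
    have hpow : (‖u t‖^(q+1))⁻¹ * ⟪u t, u t⟫ ≤ 1 := by
      have hppos : (0:ℝ) < ‖u t‖^(q+1) := pow_pos (lt_of_lt_of_le one_pos hn1) _
      rw [real_inner_self_eq_norm_sq, inv_mul_le_iff₀ hppos, mul_one]
      exact pow_le_pow_right₀ hn1 (by omega)
    have hMH0 : (0:ℝ) ≤ M * H := by positivity
    have e1 : -(lamstar*(M*H)) ≤ lam * ⟪u t, h t⟫ := by
      have h1 := (abs_le.mp hch).1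
      have h2 := mul_le_mul_of_nonneg_left h1 hlam0
      have h3 : lam * (M*H) ≤ lamstar * (M*H) := mul_le_mul_of_nonneg_right hlam1 hMH0
      linarith [h2, h3]
    have key : -(lamstar*(M*H)) - 1 ≤ ⟪u t, u'' t⟫ := by rw [hinner]; linarith
    have hself : (0:ℝ) ≤ ⟪u' t, u' t⟫ := real_inner_self_nonneg
    show -KM ≤ (⟪u t, u'' t⟫ + ⟪u' t, u' t⟫) + (⟪u' t, u' t⟫ + ⟪u'' t, u t⟫)
    rw [hinner2, hKMdef]
    linarith
  -- Step B : ‖u t‖ ≥ 1 on [0,1]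
  have hlow : ∀ s ∈ Icc (0:ℝ) 1, 1 ≤ φ s := by
    by_contra hc
    push_neg at hc
    obtain ⟨s, hs, hsφ⟩ := hc
    have hfa : 1 + KM < φ t₀ := by
      rw [hφnorm]
      have := mul_lt_mul_of_pos_right hMR (by linarith : (0:ℝ) < M)
      nlinarith
    have hright : ∀ a, a ∈ Icc (0:ℝ) 1 → a ≤ s → 0 ≤ φ' a → 1 + KM < φ a → False := by
      intro a ha has hda hfa'
      exact right_dip φ φ' φ'' hdφ hdφ' hcφ'' KM a s hKM0 has (by linarith [ha.1, hs.2])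
        (fun t ht h1 => hbound t ⟨le_trans ha.1 ht.1, le_trans ht.2 hs.2⟩ h1) hda hfa' hsφ.le
    have hleft : ∀ b, b ∈ Icc (0:ℝ) 1 → s ≤ b → φ' b ≤ 0 → 1 + KM < φ b → False := by
      intro b hb hsb hdb hfb'
      exact left_dip φ φ' φ'' hdφ hdφ' hcφ'' KM s b hKM0 hsb (by linarith [hb.2, hs.1])
        (fun t ht h1 => hbound t ⟨le_trans hs.1 ht.1, le_trans ht.2 hb.2⟩ h1) hdb hfb' hsφ.le
    have hperφ : φ 1 = φ 0 := by simp only [hφdef, ← hper]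
    have hperφ' : φ' 1 = φ' 0 := by
      simp only [hφ'def, ← hper]
      rw [show u' 1 = u' 0 from hper'.symm]
    have hφmax : ∀ x ∈ Icc (0:ℝ) 1, φ x ≤ φ t₀ := by
      intro x hx
      rw [hφnorm, hφnorm]
      exact pow_le_pow_left₀ (norm_nonneg _) (hMb x hx) 2
    rcases lt_or_ge t₀ 1 with ht₀1 | ht₀1
    · rcases lt_or_ge 0 t₀ with ht₀0 | ht₀0
      · -- interior maximum
        have hloc : IsLocalMax φ t₀ := by
          filter_upwards [Icc_mem_nhds ht₀0 ht₀1] with x hx using hφmax x hx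
        have hd0 : φ' t₀ = 0 := by
          have hz := hloc.deriv_eq_zero
          rwa [(hdφ t₀).deriv] at hz
        rcases le_total t₀ s with hts | hts
        · exact hright t₀ ht₀ hts (le_of_eq hd0.symm) hfa
        · exact hleft t₀ ht₀ hts (le_of_eq hd0) hfa
      · -- t₀ = 0
        have ht₀e : t₀ = 0 := le_antisymm ht₀0 ht₀.1
        have hφ0 : φ 0 = φ t₀ := by rw [ht₀e]
        rcases le_or_gt 0 (φ' 0) with hd | hd
        · exact hright 0 ⟨le_rfl, zero_le_one⟩ hs.1 hd (by rw [hφ0]; exact hfa)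
        · exact hleft 1 ⟨zero_le_one, le_rfl⟩ hs.2 (by rw [hperφ']; linarith)
            (by rw [hperφ, hφ0]; exact hfa)
    · -- t₀ = 1
      have ht₀e : t₀ = 1 := le_antisymm ht₀.2 ht₀1
      have hφ1 : φ 1 = φ t₀ := by rw [ht₀e]
      rcases le_or_gt 0 (φ' 0) with hd | hd
      · exact hright 0 ⟨le_rfl, zero_le_one⟩ hs.1 hd (by rw [← hperφ, hφ1]; exact hfa)
      · exact hleft 1 ⟨zero_le_one, le_rfl⟩ hs.2 (by rw [hperφ']; linarith)
          (by rw [hφ1]; exact hfa)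
  have hres : ∀ t ∈ Icc (0:ℝ) 1, 1 ≤ ‖u t‖ := by
    intro t ht
    have h1' := hlow t ht
    rw [hφnorm t] at h1'
    by_contra hxc
    push_neg at hxc
    have := pow_lt_one₀ (norm_nonneg (u t)) hxc (two_ne_zero)
    linarith
  -- Step C : the linear functional along u t₀ stays positive
  set a₀ := u t₀ with ha₀def
  set K : ℝ := lamstar*H + 1 with hKdef
  have hK1 : (1:ℝ) ≤ K := by nlinarith
  set ψ : ℝ → ℝ := fun t => ⟪a₀, u t⟫ with hψdef
  set ψ' : ℝ → ℝ := fun t => ⟪a₀, u' t⟫ with hψ'def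
  set ψ'' : ℝ → ℝ := fun t => ⟪a₀, u'' t⟫ with hψ''def
  have hdψ : ∀ t, HasDerivAt ψ (ψ' t) t := by
    intro t
    simpa using (hasDerivAt_const t a₀).inner ℝ (hd1 t)
  have hdψ' : ∀ t, HasDerivAt ψ' (ψ'' t) t := by
    intro t
    simpa using (hasDerivAt_const t a₀).inner ℝ (hd2 t)
  have hcψ' : Continuous ψ' := continuous_const.inner hcu'
  have hcψ'' : Continuous ψ'' := continuous_const.inner hcu''
  -- Rolle : a critical point of ψ
  have hψper : ψ 0 = ψ 1 := by simp only [hψdef, ← hper]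
  have hdψdiff : Differentiable ℝ ψ := fun t => (hdψ t).differentiableAt
  obtain ⟨τ, hτ, hτ0⟩ := exists_hasDerivAt_eq_zero one_pos
    hdψdiff.continuous.continuousOn hψper (fun x _ => hdψ x)
  have hτI : τ ∈ Icc (0:ℝ) 1 := Ioo_subset_Icc_self hτ
  -- bound for ψ''
  have hψ''b : ∀ t ∈ Icc (0:ℝ) 1, |ψ'' t| ≤ M * K := by
    intro t ht
    have h1t : 1 ≤ ‖u t‖ := hres t ht
    have hψeq : ψ'' t = lam * ⟪a₀, h t⟫ - (‖u t‖^(q+1))⁻¹ * ⟪a₀, u t⟫ := by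
      show ⟪a₀, u'' t⟫ = _
      rw [heq' t ht, inner_sub_right, real_inner_smul_right, real_inner_smul_right]
    have e1 : |lam * ⟪a₀, h t⟫| ≤ lamstar * (M*H) := by
      rw [abs_mul, abs_of_nonneg hlam0]
      have h1 : |⟪a₀, h t⟫| ≤ M * H := by
        calc |⟪a₀, h t⟫| ≤ ‖a₀‖ * ‖h t‖ := abs_real_inner_le_norm _ _
          _ ≤ M * H := mul_le_mul le_rfl (hHb t ht) (norm_nonneg _) hM0
      calc lam * |⟪a₀, h t⟫| ≤ lamstar * |⟪a₀, h t⟫| :=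
            mul_le_mul_of_nonneg_right hlam1 (abs_nonneg _)
        _ ≤ lamstar * (M*H) := mul_le_mul_of_nonneg_left h1 hls.le
    have e2 : |(‖u t‖^(q+1))⁻¹ * ⟪a₀, u t⟫| ≤ M := by
      have hppos : (0:ℝ) < ‖u t‖^(q+1) := pow_pos (lt_of_lt_of_le one_pos h1t) _
      rw [abs_mul, abs_of_nonneg (inv_nonneg.2 hppos.le)]
      have h1 : |⟪a₀, u t⟫| ≤ M * ‖u t‖ := by
        calc |⟪a₀, u t⟫| ≤ ‖a₀‖ * ‖u t‖ := abs_real_inner_le_norm _ _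
          _ ≤ M * ‖u t‖ := le_rfl
      have h2 : (‖u t‖^(q+1))⁻¹ * (M * ‖u t‖) ≤ M := by
        rw [inv_mul_le_iff₀ hppos]
        have h3 : ‖u t‖ ≤ ‖u t‖^(q+1) := le_self_pow₀ h1t (by omega)
        nlinarith
      calc (‖u t‖^(q+1))⁻¹ * |⟪a₀, u t⟫| ≤ (‖u t‖^(q+1))⁻¹ * (M * ‖u t‖) :=
            mul_le_mul_of_nonneg_left h1 (inv_nonneg.2 hppos.le)
        _ ≤ M := h2
    rw [hψeq]
    calc |lam * ⟪a₀, h t⟫ - (‖u t‖^(q+1))⁻¹ * ⟪a₀, u t⟫|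
        ≤ |lam * ⟪a₀, h t⟫| + |(‖u t‖^(q+1))⁻¹ * ⟪a₀, u t⟫| := abs_sub _ _
      _ ≤ lamstar * (M*H) + M := add_le_add e1 e2
      _ = M * K := by rw [hKdef]; ring
  have hMK0 : (0:ℝ) ≤ M * K := by nlinarith
  -- bound for ψ'
  have hψ'b : ∀ t ∈ Icc (0:ℝ) 1, |ψ' t| ≤ M * K := by
    intro t ht
    have hftc : ∫ x in τ..t, ψ'' x = ψ' t - ψ' τ :=
      intervalIntegral.integral_eq_sub_of_hasDerivAt (fun x _ => hdψ' x)
        (hcψ''.intervalIntegrable _ _)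
    have hsub : Set.uIoc τ t ⊆ Icc (0:ℝ) 1 :=
      subset_trans Ioc_subset_Icc_self (uIcc_subset_Icc hτI ht)
    have hb : ‖∫ x in τ..t, ψ'' x‖ ≤ M * K * |t - τ| :=
      intervalIntegral.norm_integral_le_of_norm_le_const (fun x hx => by
        rw [Real.norm_eq_abs]; exact hψ''b x (hsub hx))
    rw [hftc, hτ0, sub_zero, Real.norm_eq_abs] at hb
    have habs : |t - τ| ≤ 1 := by
      rw [abs_sub_le_iff]
      constructor <;> linarith [ht.1, ht.2, hτI.1, hτI.2]
    nlinarith [abs_nonneg (t - τ)]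
  -- positivity of ψ
  have hψt₀ : ψ t₀ = M^2 := real_inner_self_eq_norm_sq _
  have hMK : M * K < M^2 := by
    have : K < M := by rw [hKdef]; nlinarith
    nlinarith
  have hψpos : ∀ t ∈ Icc (0:ℝ) 1, 0 < ψ t := by
    intro t ht
    have hftc : ∫ x in t₀..t, ψ' x = ψ t - ψ t₀ :=
      intervalIntegral.integral_eq_sub_of_hasDerivAt (fun x _ => hdψ x)
        (hcψ'.intervalIntegrable _ _)
    have hsub : Set.uIoc t₀ t ⊆ Icc (0:ℝ) 1 :=
      subset_trans Ioc_subset_Icc_self (uIcc_subset_Icc ht₀ ht)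
    have hb : ‖∫ x in t₀..t, ψ' x‖ ≤ M * K * |t - t₀| :=
      intervalIntegral.norm_integral_le_of_norm_le_const (fun x hx => by
        rw [Real.norm_eq_abs]; exact hψ'b x (hsub hx))
    rw [hftc, Real.norm_eq_abs] at hb
    have habs : |t - t₀| ≤ 1 := by
      rw [abs_sub_le_iff]
      constructor <;> linarith [ht.1, ht.2, ht₀.1, ht₀.2]
    have h1 := (abs_le.mp hb).1
    have h2 : M * K * |t - t₀| ≤ M * K := by nlinarith [abs_nonneg (t - t₀)]
    rw [hψt₀] at h1
    linarith
  -- Step D : the zero-mean contradiction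
  set F : ℝ → EuclideanSpace ℝ (Fin n) := fun t => (‖u t‖^(q+1))⁻¹ • u t with hFdef
  have hFcont : ContinuousOn F (Set.uIcc (0:ℝ) 1) := by
    rw [uIcc_of_le zero_le_one]
    apply ContinuousOn.fun_smul
    · apply ContinuousOn.fun_inv₀ (hcu.norm.pow (q+1)).continuousOn
      intro t ht
      exact (pow_pos (lt_of_lt_of_le one_pos (hres t ht)) _).ne'
    · exact hcu.continuousOn
  have hIF : IntervalIntegrable F volume 0 1 := hFcont.intervalIntegrable
  have hIh : IntervalIntegrable (fun t => lam • h t) volume 0 1 :=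
    (hh.const_smul lam).intervalIntegrable _ _
  have hIu'' : IntervalIntegrable u'' volume 0 1 := hcu''.intervalIntegrable _ _
  have hu''int : ∫ t in (0:ℝ)..1, u'' t = u' 1 - u' 0 :=
    intervalIntegral.integral_eq_sub_of_hasDerivAt (fun x _ => hd2 x) hIu''
  have hsplit : ∫ t in (0:ℝ)..1, F t
      = ∫ t in (0:ℝ)..1, (lam • h t - u'' t) := by
    apply intervalIntegral.integral_congr
    intro t ht
    rw [uIcc_of_le zero_le_one] at ht
    show F t = lam • h t - u'' t
    rw [heq' t ht, hFdef]
    abel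
  have hF0 : ∫ t in (0:ℝ)..1, F t = 0 := by
    rw [hsplit, intervalIntegral.integral_sub hIh hIu'', hu''int,
      intervalIntegral.integral_smul, hmean, smul_zero, ← hper', sub_self, sub_self]
  have hzero : (0:ℝ) = ∫ t in (0:ℝ)..1, ⟪a₀, F t⟫ := by
    have hcomm := (innerSL ℝ a₀).intervalIntegral_comp_comm hIF
    rw [hF0] at hcomm
    simpa using hcomm.symm
  have hpos : 0 < ∫ t in (0:ℝ)..1, ⟪a₀, F t⟫ := by
    apply intervalIntegral.intervalIntegral_pos_of_pos_on
    · exact (continuousOn_const.inner hFcont).intervalIntegrable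
    · intro x hx
      have hx' : x ∈ Icc (0:ℝ) 1 := Ioo_subset_Icc_self hx
      show 0 < ⟪a₀, (‖u x‖^(q+1))⁻¹ • u x⟫
      rw [real_inner_smul_right]
      exact mul_pos (inv_pos.2 (pow_pos (lt_of_lt_of_le one_pos (hres x hx')) _))
        (hψpos x hx')
    · exact one_pos
  rw [← hzero] at hpos
  exact lt_irrefl 0 hpos
end

section
/- Suppose H : [0,1] → ℝ, H(0) = H(1), is continuous (i.e. Im(H) is contained in a line in ℝ^n, identified with ℝ × ℝ^{n-1} with H = (H₁, 0)). Then for any ε > 0 the repulsive problem z'' = ε (z - H(t))/|z - H(t)|^{q+1} with periodic boundary conditions has no solution z : [0,1] → ℝ^n avoiding the graph values H(t). -/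
open Set Filter Topology

private lemma deriv_of_cd2 (y : ℝ → ℝ) (hy : ContDiff ℝ 2 y) : ContDiff ℝ 1 (deriv y) := by
  have h2 : ContDiff ℝ (1+1) y := by exact_mod_cast hy
  exact (contDiff_succ_iff_deriv.mp h2).2.2

/-- A function on `[0,1]` with periodic derivative cannot have everywhere positive
second derivative. -/
private lemma lemX (g : ℝ → ℝ) (hg : ContDiff ℝ 2 g)
    (hpos : ∀ t ∈ Icc (0:ℝ) 1, 0 < deriv (deriv g) t)
    (hper : deriv g 0 = deriv g 1) : False := by
  have hd := deriv_of_cd2 g hg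
  have hmono : StrictMonoOn (deriv g) (Icc 0 1) := by
    apply strictMonoOn_of_deriv_pos (convex_Icc 0 1) hd.continuous.continuousOn
    intro t ht
    rw [interior_Icc] at ht
    exact hpos t ⟨le_of_lt ht.1, le_of_lt ht.2⟩
  have := hmono (left_mem_Icc.2 zero_le_one) (right_mem_Icc.2 zero_le_one) one_pos
  exact absurd hper (ne_of_lt this)

/-- It is impossible to have a maximum with vanishing derivative and positive second
derivative. -/
private lemma lemB (y : ℝ → ℝ) (hy : ContDiff ℝ 2 y) (t₀ : ℝ) (ht₀ : t₀ ∈ Ico (0:ℝ) 1)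
    (hd0 : deriv y t₀ = 0) (hdd : 0 < deriv (deriv y) t₀)
    (hmax : ∀ s ∈ Icc (0:ℝ) 1, y s ≤ y t₀) : False := by
  have hd := deriv_of_cd2 y hy
  have hder : HasDerivAt (deriv y) (deriv (deriv y) t₀) t₀ :=
    ((hd.differentiable one_ne_zero) t₀).hasDerivAt
  have htend : Tendsto (slope (deriv y) t₀) (𝓝[>] t₀) (𝓝 (deriv (deriv y) t₀)) :=
    (hasDerivAt_iff_tendsto_slope.mp hder).mono_left
      (nhdsWithin_mono _ (fun s hs => ne_of_gt hs))
  have hev : ∀ᶠ s in 𝓝[>] t₀, 0 < slope (deriv y) t₀ s :=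
    htend.eventually (eventually_gt_nhds hdd)
  have hev2 : ∀ᶠ s in 𝓝[>] t₀, 0 < deriv y s := by
    filter_upwards [hev, self_mem_nhdsWithin] with s hs hs'
    rw [slope_def_field, hd0, sub_zero] at hs
    have hst : 0 < s - t₀ := sub_pos.2 hs'
    have := mul_pos hs hst
    rwa [div_mul_cancel₀] at this
    exact ne_of_gt hst
  obtain ⟨u, hu, hsub⟩ := mem_nhdsGT_iff_exists_Ioc_subset.mp hev2
  set v := min u 1 with hv
  have htv : t₀ < v := lt_min hu ht₀.2
  have hmono : StrictMonoOn y (Icc t₀ v) := by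
    apply strictMonoOn_of_deriv_pos (convex_Icc t₀ v) hy.continuous.continuousOn
    intro s hs
    rw [interior_Icc] at hs
    exact hsub ⟨hs.1, le_trans (le_of_lt hs.2) (min_le_left u 1)⟩
  have h1 : y t₀ < y v := hmono (left_mem_Icc.2 (le_of_lt htv)) (right_mem_Icc.2 (le_of_lt htv)) htv
  have h2 : y v ≤ y t₀ := hmax v ⟨le_trans ht₀.1 (le_of_lt htv), min_le_right u 1⟩
  exact absurd h2 (not_le.2 h1)

/-- Maximum principle: a periodic solution of `y'' = c y` with `c > 0` satisfies `y ≤ 0`. -/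
private lemma lemA (y c : ℝ → ℝ) (hy : ContDiff ℝ 2 y)
    (hc : ∀ t ∈ Icc (0:ℝ) 1, 0 < c t)
    (heq : ∀ t ∈ Icc (0:ℝ) 1, deriv (deriv y) t = c t * y t)
    (h0 : y 0 = y 1) (h0' : deriv y 0 = deriv y 1) :
    ∀ t ∈ Icc (0:ℝ) 1, y t ≤ 0 := by
  by_contra hcon
  push_neg at hcon
  obtain ⟨s, hs, hspos⟩ := hcon
  obtain ⟨t₀, ht₀, hmax⟩ := isCompact_Icc.exists_isMaxOn (nonempty_Icc.2 zero_le_one)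
    hy.continuous.continuousOn (f := y)
  have hmax : ∀ u ∈ Icc (0:ℝ) 1, y u ≤ y t₀ := hmax
  have hpos : 0 < y t₀ := lt_of_lt_of_le hspos (hmax s hs)
  by_cases hio : t₀ ∈ Ioo (0:ℝ) 1
  · have hloc : IsLocalMax y t₀ := by
      have hm : IsMaxOn y (Icc 0 1) t₀ := fun u hu => hmax u hu
      exact hm.isLocalMax (Icc_mem_nhds hio.1 hio.2)
    have hd0 : deriv y t₀ = 0 := hloc.deriv_eq_zero
    have hdd : 0 < deriv (deriv y) t₀ := by
      rw [heq t₀ ⟨le_of_lt hio.1, le_of_lt hio.2⟩]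
      exact mul_pos (hc t₀ ⟨le_of_lt hio.1, le_of_lt hio.2⟩) hpos
    exact lemB y hy t₀ ⟨le_of_lt hio.1, hio.2⟩ hd0 hdd hmax
  · have hmax0 : ∀ u ∈ Icc (0:ℝ) 1, y u ≤ y 0 := by
      have : t₀ = 0 ∨ t₀ = 1 := by
        rcases ht₀ with ⟨h1, h2⟩
        rcases eq_or_lt_of_le h1 with h | h
        · exact Or.inl h.symm
        rcases eq_or_lt_of_le h2 with h' | h'
        · exact Or.inr h'
        exact absurd ⟨h, h'⟩ hio
      rcases this with rfl | rfl
      · exact hmax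
      · intro u hu; rw [h0]; exact hmax u hu
    have hpos0 : 0 < y 0 := lt_of_lt_of_le hpos (hmax0 t₀ ht₀)
    have hder0 : HasDerivAt y (deriv y 0) 0 := ((hy.differentiable two_ne_zero) 0).hasDerivAt
    have hle : deriv y 0 ≤ 0 := by
      have htend : Tendsto (slope y 0) (𝓝[>] 0) (𝓝 (deriv y 0)) :=
        (hasDerivAt_iff_tendsto_slope.mp hder0).mono_left
          (nhdsWithin_mono _ (fun u hu => ne_of_gt hu))
      refine le_of_tendsto htend ?_
      filter_upwards [Ioc_mem_nhdsGT_of_mem (left_mem_Ico.2 one_pos)] with u hu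
      rw [slope_def_field]
      apply div_nonpos_of_nonpos_of_nonneg
      · exact sub_nonpos.2 (hmax0 u ⟨le_of_lt hu.1, hu.2⟩)
      · simpa using le_of_lt hu.1
    have hder1 : HasDerivAt y (deriv y 1) 1 := ((hy.differentiable two_ne_zero) 1).hasDerivAt
    have hge : 0 ≤ deriv y 1 := by
      have htend : Tendsto (slope y 1) (𝓝[<] 1) (𝓝 (deriv y 1)) :=
        (hasDerivAt_iff_tendsto_slope.mp hder1).mono_left
          (nhdsWithin_mono _ (fun u hu => ne_of_lt hu))
      refine ge_of_tendsto htend ?_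
      filter_upwards [Ico_mem_nhdsLT_of_mem (right_mem_Ioc.2 one_pos)] with u hu
      rw [slope_def_field]
      apply div_nonneg_of_nonpos
      · rw [h0] at hmax0
        exact sub_nonpos.2 (hmax0 u ⟨hu.1, le_of_lt hu.2⟩)
      · exact sub_nonpos.2 (le_of_lt hu.2)
    have hd0 : deriv y 0 = 0 := le_antisymm hle (h0' ▸ hge)
    have hdd : 0 < deriv (deriv y) 0 := by
      rw [heq 0 (left_mem_Icc.2 zero_le_one)]
      exact mul_pos (hc 0 (left_mem_Icc.2 zero_le_one)) hpos0
    exact lemB y hy 0 (left_mem_Ico.2 one_pos) hd0 hdd hmax0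

/-- If `Im(H)` is contained in a line (here: the first coordinate axis, `H = (H₁, 0)`),
then the repulsive problem `z'' = ε (z - H(t))/|z - H(t)|^(q+1)` with periodic boundary
conditions has no solution, for any `ε > 0`. -/
theorem no_solution_H_on_line (n q : ℕ) (hn : 0 < n) (hq : 2 ≤ q)
    (eps : ℝ) (heps : 0 < eps)
    (H₁ : ℝ → ℝ) (hH₁ : Continuous H₁) (hper : H₁ 0 = H₁ 1)
    (H : ℝ → EuclideanSpace ℝ (Fin n))
    (hH : ∀ t, H t = EuclideanSpace.single (⟨0, hn⟩ : Fin n) (H₁ t))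
    (z : ℝ → EuclideanSpace ℝ (Fin n)) (hz : ContDiff ℝ 2 z)
    (hzper : z 0 = z 1) (hzper' : deriv z 0 = deriv z 1)
    (hne : ∀ t ∈ Icc (0:ℝ) 1, z t ≠ H t)
    (heq : ∀ t ∈ Icc (0:ℝ) 1,
      deriv (deriv z) t = eps • (‖z t - H t‖ ^ (q + 1))⁻¹ • (z t - H t)) :
    False := by
  set i0 : Fin n := ⟨0, hn⟩ with hi0
  set c : ℝ → ℝ := fun t => eps * (‖z t - H t‖ ^ (q + 1))⁻¹ with hcdef
  have hc : ∀ t ∈ Icc (0:ℝ) 1, 0 < c t := by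
    intro t ht
    have hnorm : 0 < ‖z t - H t‖ := by
      rw [norm_pos_iff, sub_ne_zero]; exact hne t ht
    exact mul_pos heps (inv_pos.2 (pow_pos hnorm _))
  have hdiffz : Differentiable ℝ z := hz.differentiable two_ne_zero
  have hdz : ContDiff ℝ 1 (deriv z) := by
    have h2 : ContDiff ℝ (1+1) z := by exact_mod_cast hz
    exact (contDiff_succ_iff_deriv.mp h2).2.2
  have hdiffdz : Differentiable ℝ (deriv z) := hdz.differentiable one_ne_zero
  have hcd : ∀ i : Fin n, ContDiff ℝ 2 (fun t => z t i) := by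
    intro i
    have : ContDiff ℝ 2 ((EuclideanSpace.proj (𝕜 := ℝ) i) ∘ z) :=
      (EuclideanSpace.proj (𝕜 := ℝ) i).contDiff.comp hz
    exact this
  have hder1 : ∀ (i : Fin n) (t : ℝ), deriv (fun s => z s i) t = deriv z t i := by
    intro i t
    exact ((EuclideanSpace.proj (𝕜 := ℝ) i).hasFDerivAt.comp_hasDerivAt t
      ((hdiffz t).hasDerivAt)).deriv
  have hder2 : ∀ (i : Fin n) (t : ℝ),
      deriv (deriv (fun s => z s i)) t = deriv (deriv z) t i := by
    intro i t
    have h1 : deriv (fun s => z s i) = fun s => deriv z s i := funext (hder1 i)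
    rw [h1]
    exact ((EuclideanSpace.proj (𝕜 := ℝ) i).hasFDerivAt.comp_hasDerivAt t
      ((hdiffdz t).hasDerivAt)).deriv
  have heqc : ∀ (i : Fin n), ∀ t ∈ Icc (0:ℝ) 1,
      deriv (deriv (fun s => z s i)) t = c t * (z t i - H t i) := by
    intro i t ht
    rw [hder2 i t, heq t ht]
    simp only [PiLp.smul_apply, PiLp.sub_apply, smul_eq_mul, hcdef]
    ring
  -- transversal coordinates vanish
  have hHz : ∀ (i : Fin n), i ≠ i0 → ∀ t, H t i = 0 := by
    intro i hi t
    rw [hH t]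
    rw [EuclideanSpace.single_apply, if_neg hi]
  have hpz : ∀ i : Fin n, z 0 i = z 1 i := fun i => congrArg (fun v => v i) hzper
  have hpz' : ∀ i : Fin n, deriv z 0 i = deriv z 1 i :=
    fun i => congrArg (fun v => v i) hzper'
  have hY : ∀ i : Fin n, i ≠ i0 → ∀ t ∈ Icc (0:ℝ) 1, z t i = 0 := by
    intro i hi
    have heqi : ∀ t ∈ Icc (0:ℝ) 1, deriv (deriv (fun s => z s i)) t = c t * (z t i) := by
      intro t ht; rw [heqc i t ht, hHz i hi t, sub_zero]
    have hp0' : deriv (fun s => z s i) 0 = deriv (fun s => z s i) 1 := by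
      rw [hder1 i 0, hder1 i 1]; exact hpz' i
    have hle := lemA (fun s => z s i) c (hcd i) hc heqi (hpz i) hp0'
    have hnegd : ∀ t : ℝ, deriv (fun s => -(z s i)) t = -(deriv (fun s => z s i) t) :=
      fun t => deriv.neg
    have hneg2 : ∀ t ∈ Icc (0:ℝ) 1,
        deriv (deriv (fun s => -(z s i))) t = c t * (-(z t i)) := by
      intro t ht
      have h1 : deriv (fun s => -(z s i)) = fun t => -(deriv (fun s => z s i) t) :=
        funext hnegd
      rw [h1]
      have : deriv (fun t => -(deriv (fun s => z s i) t)) t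
          = -(deriv (deriv (fun s => z s i)) t) := deriv.neg
      rw [this, heqi t ht]; ring
    have hge := lemA (fun s => -(z s i)) c ((hcd i).neg) hc hneg2
      (by simp only [hpz i]) (by rw [hnegd 0, hnegd 1, hp0'])
    intro t ht
    have h1 := hle t ht
    have h2 := hge t ht
    simp only [neg_nonpos] at h2
    exact le_antisymm h1 h2
  -- the first coordinate
  have hHzi0 : ∀ t, H t i0 = H₁ t := by
    intro t; rw [hH t]; rw [EuclideanSpace.single_apply, if_pos rfl]
  set f : ℝ → ℝ := fun t => z t i0 - H₁ t with hfdef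
  have heqx : ∀ t ∈ Icc (0:ℝ) 1, deriv (deriv (fun s => z s i0)) t = c t * f t := by
    intro t ht; rw [heqc i0 t ht, hHzi0 t]
  have hfne : ∀ t ∈ Icc (0:ℝ) 1, f t ≠ 0 := by
    intro t ht hf
    apply hne t ht
    ext i
    by_cases hi : i = i0
    · subst hi
      rw [hHzi0 t]
      have : z t i0 - H₁ t = 0 := hf
      linarith
    · rw [hY i hi t ht, hHz i hi t]
  have hfc : Continuous f := ((hcd i0).continuous).sub hH₁
  have hperx : deriv (fun s => z s i0) 0 = deriv (fun s => z s i0) 1 := by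
    rw [hder1 i0 0, hder1 i0 1]; exact hpz' i0
  rcases lt_or_gt_of_ne (hfne 0 (left_mem_Icc.2 zero_le_one)) with h | h
  · -- f 0 < 0 : then f < 0 everywhere, apply lemX to -x
    have hneg : ∀ t ∈ Icc (0:ℝ) 1, f t < 0 := by
      intro t ht
      by_contra hcon
      have hpos : 0 < f t := lt_of_le_of_ne (not_lt.1 hcon) (Ne.symm (hfne t ht))
      have hiv := intermediate_value_Icc (a := 0) (b := t) ht.1
        (hfc.continuousOn (s := Icc 0 t))
      obtain ⟨s, hs, hfs⟩ := hiv ⟨le_of_lt h, le_of_lt hpos⟩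
      exact hfne s ⟨hs.1, le_trans hs.2 ht.2⟩ hfs
    apply lemX (fun s => -(z s i0)) ((hcd i0).neg)
    · intro t ht
      have hnegd : ∀ u : ℝ, deriv (fun s => -(z s i0)) u = -(deriv (fun s => z s i0) u) :=
        fun u => deriv.neg
      have h1 : deriv (fun s => -(z s i0)) = fun u => -(deriv (fun s => z s i0) u) :=
        funext hnegd
      rw [h1]
      have h2 : deriv (fun u => -(deriv (fun s => z s i0) u)) t
          = -(deriv (deriv (fun s => z s i0)) t) := deriv.neg
      rw [h2, heqx t ht]
      have := mul_pos (hc t ht) (neg_pos.2 (hneg t ht))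
      linarith [this]
    · have hnegd : ∀ u : ℝ, deriv (fun s => -(z s i0)) u = -(deriv (fun s => z s i0) u) :=
        fun u => deriv.neg
      rw [hnegd 0, hnegd 1, hperx]
  · -- f 0 > 0 : then f > 0 everywhere, apply lemX to x
    have hpos : ∀ t ∈ Icc (0:ℝ) 1, 0 < f t := by
      intro t ht
      by_contra hcon
      have hneg : f t < 0 := lt_of_le_of_ne (not_lt.1 hcon) (hfne t ht)
      have hiv := intermediate_value_Icc' (a := 0) (b := t) ht.1
        (hfc.continuousOn (s := Icc 0 t))
      obtain ⟨s, hs, hfs⟩ := hiv ⟨le_of_lt hneg, le_of_lt h⟩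
      exact hfne s ⟨hs.1, le_trans hs.2 ht.2⟩ hfs
    apply lemX (fun s => z s i0) (hcd i0)
    · intro t ht
      rw [heqx t ht]
      exact mul_pos (hc t ht) (hpos t ht)
    · exact hperx
end

section
/- Let N(u) = u/|u|^{q+1} for u ∈ ℝ^n \ {0}, q ≥ 2, and let the map x ↦ QN(x) := ∫₀¹ x(t)/|x(t)|^{q+1} dt be defined on the open set of C² periodic curves x : [0,1] → ℝ^n that never vanish. Then 0 is a regular value of QN: at every x with QN(x) = 0, the differential d(QN)(x) : C²_per → ℝ^n is surjective. -/
open Set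

section Aux

variable {E : Type*} [NormedAddCommGroup E] [InnerProductSpace ℝ E]

local notation "⟪" a ", " b "⟫" => @inner ℝ _ _ a b

private lemma dN_apply_aux (k : ℕ) (u w : E) (hu : u ≠ 0) :
    fderiv ℝ (fun u : E => (‖u‖ ^ (k + 3))⁻¹ • u) u
      ((‖u‖ ^ (k + 3) : ℝ) • w + (-((((k:ℝ)+3))/((k:ℝ)+2) * ‖u‖ ^ (k+1) * ⟪u, w⟫)) • u) = w := by
  have hs : (0:ℝ) < ‖u‖ := norm_pos_iff.mpr hu
  set p : ℝ := (k:ℝ) + 3 with hp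
  have h1 : HasFDerivAt (fun u : E => ‖u‖ ^ p)
      ((p * ‖u‖ ^ (p - 2)) • innerSL ℝ u) u :=
    hasFDerivAt_norm_rpow u (by have : (0:ℝ) ≤ (k:ℝ) := Nat.cast_nonneg k; rw [hp]; linarith)
  have hne : (‖u‖ : ℝ) ^ p ≠ 0 := by positivity
  have h2 := ((hasFDerivAt_inv' (𝕜 := ℝ) hne).comp u h1).smul (hasFDerivAt_id u)
  have hfun : (fun u : E => (‖u‖ ^ (k + 3))⁻¹ • u) = fun u : E => (‖u‖ ^ p)⁻¹ • u := by
    funext z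
    rw [hp, show (k:ℝ) + 3 = ((k+3 : ℕ) : ℝ) by push_cast; ring, Real.rpow_natCast]
  simp only [Function.comp_def, id_eq] at h2
  rw [hfun, show (fun u : E => (‖u‖ ^ p)⁻¹ • u) = ((fun x : E => (‖x‖ ^ p)⁻¹) • id) from rfl, h2.fderiv]
  simp only [ContinuousLinearMap.add_apply, ContinuousLinearMap.smul_apply,
    ContinuousLinearMap.comp_apply, ContinuousLinearMap.smulRight_apply,
    ContinuousLinearMap.id_apply, ContinuousLinearMap.neg_apply,
    ContinuousLinearMap.mulLeftRight_apply, innerSL_apply_apply, inner_add_right,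
    real_inner_smul_right, real_inner_self_eq_norm_sq]
  have e1 : ‖u‖ ^ p = ‖u‖ ^ (k+3) := by
    rw [hp, show (k:ℝ) + 3 = ((k+3 : ℕ) : ℝ) by push_cast; ring, Real.rpow_natCast]
  have e2 : ‖u‖ ^ (p-2) = ‖u‖ ^ (k+1) := by
    rw [hp, show (k:ℝ) + 3 - 2 = ((k+1 : ℕ) : ℝ) by push_cast; ring, Real.rpow_natCast]
  have hk2 : (k:ℝ) + 2 ≠ 0 := by positivity
  have hn0 : ‖u‖ ≠ 0 := ne_of_gt hs
  rw [e1, e2]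
  match_scalars
  · field_simp
  · rw [hp]
    have hk3 : (2:ℝ) + k ≠ 0 := by positivity
    field_simp
    ring_nf
    field_simp
    ring

private lemma G_contDiffAt_aux (k : ℕ) (w : E) {u : E} (hu : u ≠ 0) :
    ContDiffAt ℝ 2 (fun u : E =>
      (‖u‖ ^ (k + 3) : ℝ) • w + (-((((k:ℝ)+3))/((k:ℝ)+2) * ‖u‖ ^ (k+1) * ⟪u, w⟫)) • u) u := by
  have hnrm : ContDiffAt ℝ 2 (fun u : E => ‖u‖) u := contDiffAt_id.norm ℝ hu
  have hinner : ContDiffAt ℝ 2 (fun u : E => ⟪u, w⟫) u :=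
    contDiffAt_id.inner ℝ contDiffAt_const
  exact ((hnrm.pow (k+3)).smul contDiffAt_const).add
    ((((contDiffAt_const.mul (hnrm.pow (k+1))).mul hinner).neg).smul contDiffAt_id)

end Aux

/-- `0` is a regular value of `QN(x) = ∫₀¹ x(t)/|x(t)|^(q+1) dt` on the set of
never-vanishing `C²` periodic curves: at every zero `x` of `QN`, the differential
`v ↦ ∫₀¹ dn(x(t))(v(t)) dt` is surjective onto `ℝⁿ`. -/
theorem QN_zero_regular_value (n q : ℕ) (hq : 2 ≤ q)
    (N : EuclideanSpace ℝ (Fin n) → EuclideanSpace ℝ (Fin n))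
    (hN : ∀ u, N u = (‖u‖ ^ (q + 1))⁻¹ • u)
    (x : ℝ → EuclideanSpace ℝ (Fin n)) (hx : ContDiff ℝ 2 x)
    (hper : x 0 = x 1) (hper' : deriv x 0 = deriv x 1)
    (hne : ∀ t, x t ≠ 0)
    (hzero : ∫ t in (0:ℝ)..1, N (x t) = 0) :
    ∀ w : EuclideanSpace ℝ (Fin n),
      ∃ v : ℝ → EuclideanSpace ℝ (Fin n), ContDiff ℝ 2 v ∧ v 0 = v 1 ∧
        deriv v 0 = deriv v 1 ∧
        (∫ t in (0:ℝ)..1, fderiv ℝ N (x t) (v t)) = w := by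
  intro w
  obtain ⟨k, rfl⟩ : ∃ k, q = k + 2 := ⟨q - 2, by omega⟩
  set G : EuclideanSpace ℝ (Fin n) → EuclideanSpace ℝ (Fin n) := fun u =>
    (‖u‖ ^ (k + 3) : ℝ) • w
      + (-((((k:ℝ)+3))/((k:ℝ)+2) * ‖u‖ ^ (k+1) * (inner ℝ u w : ℝ))) • u with hG
  have hNfun : N = fun u : EuclideanSpace ℝ (Fin n) => (‖u‖ ^ (k + 3))⁻¹ • u := by
    funext u
    rw [hN]
  have hGc : ∀ u : EuclideanSpace ℝ (Fin n), u ≠ 0 → ContDiffAt ℝ 2 G u := fun u hu =>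
    G_contDiffAt_aux k w hu
  refine ⟨fun t => G (x t), ?_, by show G (x 0) = G (x 1); rw [hper], ?_, ?_⟩
  · exact contDiff_iff_contDiffAt.2 fun t => (hGc _ (hne t)).comp t hx.contDiffAt
  · have hder : ∀ t, HasDerivAt (fun t => G (x t)) (fderiv ℝ G (x t) (deriv x t)) t := by
      intro t
      exact (((hGc _ (hne t)).differentiableAt (by norm_num)).hasFDerivAt).comp_hasDerivAt t
        ((hx.differentiable (by norm_num) t).hasDerivAt)
    rw [(hder 0).deriv, (hder 1).deriv, hper, hper']
  · have hconst : ∀ t, fderiv ℝ N (x t) (G (x t)) = w := by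
      intro t
      rw [hNfun, hG]
      exact dN_apply_aux k (x t) w (hne t)
    simp only [hconst]
    simp
end
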